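/- After the elementwise compare-and-swap shuffle of two descending-sorted lists L₁, L₂ with |L₁| ≥ |L₂|, both resulting lists are still sorted in descending order. -/

import Mathlib

variable {α : Type*} [LinearOrder α]

/-- The first list after the elementwise compare-and-swap shuffle. -/
def shuffleFst (L₁ L₂ : List α) : List α :=
  List.zipWith max L₁ L₂ ++ L₁.drop L₂.length

/-- The second list after the elementwise compare-and-swap shuffle. -/
def shuffleSnd (L₁ L₂ : List α) : List α :=
  List.zipWith min L₁ L₂ ++ L₂.drop L₁.length

/-- The shuffle of two descending-sorted lists with `|L₁| ≥ |L₂|` yields two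
descending-sorted lists. -/
theorem shuffle_preserves_sorted (L₁ L₂ : List α)
    (hlen : L₂.length ≤ L₁.length)
    (hs₁ : L₁.Pairwise (· ≥ ·)) (hs₂ : L₂.Pairwise (· ≥ ·)) :
    (shuffleFst L₁ L₂).Pairwise (· ≥ ·) ∧ (shuffleSnd L₁ L₂).Pairwise (· ≥ ·) := by
  rw [List.pairwise_iff_getElem] at hs₁ hs₂
  rw [List.pairwise_iff_getElem, List.pairwise_iff_getElem]
  have hz : (List.zipWith (max : α → α → α) L₁ L₂).length = L₂.length := by
    simp [List.length_zipWith, Nat.min_eq_right hlen]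
  have hz' : (List.zipWith (min : α → α → α) L₁ L₂).length = L₂.length := by
    simp [List.length_zipWith, Nat.min_eq_right hlen]
  have hlenF : (shuffleFst L₁ L₂).length = L₁.length := by
    simp [shuffleFst, List.length_zipWith, Nat.min_eq_right hlen]
    omega
  have hlenS : (shuffleSnd L₁ L₂).length = L₂.length := by
    simp [shuffleSnd, List.length_zipWith, Nat.min_eq_right hlen,
      List.drop_eq_nil_of_le hlen]
  have hF : ∀ (i : ℕ) (hi : i < L₁.length),
      (shuffleFst L₁ L₂)[i]'(by omega) =
        if h : i < L₂.length then max (L₁[i]) (L₂[i]) else L₁[i] := by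
    intro i hi
    by_cases h : i < L₂.length
    · rw [dif_pos h]; unfold shuffleFst; rw [ List.getElem_append_left (by omega),
        List.getElem_zipWith]
    · rw [dif_neg h]; unfold shuffleFst; rw [ List.getElem_append_right (by omega)]
      simp [hz]
      congr 1
      omega
  have hS : ∀ (i : ℕ) (hi : i < L₂.length),
      (shuffleSnd L₁ L₂)[i]'(by omega) = min (L₁[i]'(by omega)) (L₂[i]) := by
    intro i hi
    unfold shuffleSnd; rw [ List.getElem_append_left (by omega), List.getElem_zipWith]
  constructor
  · intro i j hi hj hij
    rw [hlenF] at hj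
    have hi : i < L₁.length := by omega
    rw [hF i hi, hF j hj]
    have h1 : L₁[i] ≥ L₁[j] := hs₁ i j hi hj hij
    by_cases hj2 : j < L₂.length
    · have hi2 : i < L₂.length := by omega
      rw [dif_pos hi2, dif_pos hj2]
      exact max_le_max h1 (hs₂ i j hi2 hj2 hij)
    · rw [dif_neg hj2]
      by_cases hi2 : i < L₂.length
      · rw [dif_pos hi2]; exact le_trans h1 (le_max_left _ _)
      · rw [dif_neg hi2]; exact h1
  · intro i j hi hj hij
    rw [hlenS] at hj
    have hi : i < L₂.length := by omega
    rw [hS i hi, hS j hj]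
    exact min_le_min (hs₁ i j (by omega) (by omega) hij) (hs₂ i j hi hj hij)
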